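/- Let 0 < s < T, τ*_s := τ* ∧ s, σ_s := ρ^{Root} ∧ (T − τ*_s). Then E^λ_y[|X_{σ_s} − Y_{τ*_s}|] = E^λ_y[|X_{σ_s} − Y_{τ*_{s−1}}| + 1_{X_{σ_s} = Y_{τ*_{s−1}},\, τ* ≥ s}], and moreover E^λ_y[|X_{σ_{s−1}} − Y_{τ*_{s−1}}|] = E^λ_y[|X_{σ_s} − Y_{τ*_{s−1}}| + 1_{X_{σ_s} = Y_{τ*_{s−1}},\, τ* ≥ s,\, ρ^{Root} > T−s}], where in fact on the event {X_{σ_s} = Y_{τ*_{s−1}}, τ* ≥ s} one automatically has ρ^{Root} > T − s. -/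

import Mathlib

open MeasureTheory ProbabilityTheory

noncomputable section

namespace SwitchingIdentities

variable {Ω : Type*} [MeasurableSpace Ω]

/-- The increment `ξ` has the fair `±1` law. -/
def FairSign (P : Measure Ω) (ξ : Ω → ℤ) : Prop :=
  P {ω | ξ ω = 1} = 1 / 2 ∧ P {ω | ξ ω = -1} = 1 / 2

/-- `ξ` and `η` are the increment families of two independent simple symmetric random
walks on `ℤ`: all increments are measurable, fair `±1` coins, and the whole family
`(ξ₀, ξ₁, …, η₀, η₁, …)` is independent. -/
def IndepSSRWIncrements (P : Measure Ω) (ξ η : ℕ → Ω → ℤ) : Prop :=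
  (∀ n, Measurable (ξ n)) ∧ (∀ n, Measurable (η n)) ∧
  (∀ n, FairSign P (ξ n)) ∧ (∀ n, FairSign P (η n)) ∧
  iIndepFun (Sum.elim ξ η) P

/-- The random walk with increments `ξ` started at `x`. -/
def walk (ξ : ℕ → Ω → ℤ) (x : ℤ) (t : ℕ) (ω : Ω) : ℤ :=
  x + ∑ i ∈ Finset.range t, ξ i ω

/-- A Root continuation set: if `(t,m) ∈ D` then `(s,m) ∈ D` for all `s < t`. -/
def IsRootCont {α : Type*} (D : Set (ℕ × α)) : Prop :=
  ∀ t m, (t, m) ∈ D → ∀ s, s < t → (s, m) ∈ D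

/-- A Rost continuation set: if `(t,m) ∈ D` then `(s,m) ∈ D` for all `s > t`. -/
def IsRostCont {α : Type*} (D : Set (ℕ × α)) : Prop :=
  ∀ t m, (t, m) ∈ D → ∀ s, t < s → (s, m) ∈ D

/-- `hit D Z ω = inf {t : (t, Z_t) ∉ D}` (junk value `0` if the walk never leaves `D`). -/
def hit {α : Type*} (D : Set (ℕ × α)) (Z : ℕ → Ω → α) (ω : Ω) : ℕ :=
  sInf {t | (t, Z t ω) ∉ D}

/-- `hitBy D Z n ω = inf {t : (t, Z_t) ∉ D} ∧ n` (equal to `n` if the walk never leaves `D`). -/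
def hitBy {α : Type*} (D : Set (ℕ × α)) (Z : ℕ → Ω → α) (n : ℕ) (ω : Ω) : ℕ :=
  sInf ({t | (t, Z t ω) ∉ D} ∪ {n})

/-- `revHitBy D Z T ω = inf {t : (T − t, Z_t) ∉ D} ∧ T`, the exit time of the time-reversed
space-time walk, capped at `T`. -/
def revHitBy {α : Type*} (D : Set (ℕ × α)) (Z : ℕ → Ω → α) (T : ℕ) (ω : Ω) : ℕ :=
  sInf ({t | (T - t, Z t ω) ∉ D} ∪ {T})

/-- The potential function `U_m(z) = −∑_x |z − x| m({x})` of a measure `m` on `ℤ`. -/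
def potential (m : Measure ℤ) (z : ℤ) : ℝ :=
  -∑' w : ℤ, (|z - w| : ℤ) * (m {w}).toReal

/-- A measure on `ℤ` has a finite first moment. -/
def FiniteFirstMoment (m : Measure ℤ) : Prop :=
  Integrable (fun z : ℤ => (z : ℝ)) m

/-- `τ` is a stopping time of the natural filtration of the process `Z`:
`{τ ≤ n} ∈ σ(Z_0, …, Z_n)` for every `n`. -/
def IsNatStopping {α : Type*} [MeasurableSpace α] (Z : ℕ → Ω → α) (τ : Ω → ℕ) : Prop :=
  ∀ n : ℕ,
    MeasurableSet[MeasurableSpace.comap (fun ω => (fun i : Fin (n + 1) => Z i ω)) inferInstance]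
      {ω | τ ω ≤ n}

/-- The law `μ^{Root}` of `X_{ρ^{Root}}` where `X` has increments `ξ` and `X_0 ∼ λ`. -/
def muRoot (P : Measure Ω) (ξ : ℕ → Ω → ℤ) (D : Set (ℕ × ℤ)) (lam : Measure ℤ) : Measure ℤ :=
  Measure.map (fun p : ℤ × Ω => walk ξ p.1 (hit D (walk ξ p.1) p.2) p.2) (lam.prod P)

/-- The law `μ^{Root}_T` of `X_{ρ^{Root} ∧ T}` where `X` has increments `ξ` and `X_0 ∼ λ`. -/
def muRootT (P : Measure Ω) (ξ : ℕ → Ω → ℤ) (D : Set (ℕ × ℤ)) (lam : Measure ℤ) (T : ℕ) :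
    Measure ℤ :=
  Measure.map (fun p : ℤ × Ω => walk ξ p.1 (hitBy D (walk ξ p.1) T p.2) p.2) (lam.prod P)

section Aux

section PureAux

variable {α : Type*}

/-- pure capped hitting time -/
def hitP (D : Set (ℕ × α)) (f : ℕ → α) (n : ℕ) : ℕ :=
  sInf ({t | (t, f t) ∉ D} ∪ {n})

/-- pure reversed capped hitting time -/
def rhitP (D : Set (ℕ × α)) (f : ℕ → α) (T : ℕ) : ℕ :=
  sInf ({t | (T - t, f t) ∉ D} ∪ {T})

lemma hitP_le (D : Set (ℕ × α)) (f : ℕ → α) (n : ℕ) : hitP D f n ≤ n :=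
  Nat.sInf_le (Or.inr rfl)

lemma hitP_mem (D : Set (ℕ × α)) (f : ℕ → α) (n : ℕ) :
    (hitP D f n, f (hitP D f n)) ∉ D ∨ hitP D f n = n := by
  have h := Nat.sInf_mem (⟨n, Or.inr rfl⟩ : Set.Nonempty ({t | (t, f t) ∉ D} ∪ {n}))
  simpa [hitP, rhitP, Set.mem_union, Set.mem_setOf_eq, Set.mem_singleton_iff, or_comm] using h

lemma mem_of_lt_hitP {D : Set (ℕ × α)} {f : ℕ → α} {n t : ℕ} (h : t < hitP D f n) :
    (t, f t) ∈ D := by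
  have h2 := Nat.notMem_of_lt_sInf (h : t < sInf _)
  by_contra hc
  exact h2 (Or.inl hc)

lemma hitP_le_of_notMem {D : Set (ℕ × α)} {f : ℕ → α} {t : ℕ} (n : ℕ) (h : (t, f t) ∉ D) :
    hitP D f n ≤ t := Nat.sInf_le (Or.inl h)

lemma hitP_le_hitP {D : Set (ℕ × α)} {f g : ℕ → α} {n : ℕ}
    (h : ∀ t < n, f t = g t) : hitP D f n ≤ hitP D g n := by
  rcases lt_or_eq_of_le (hitP_le D g n) with hlt | heq
  · rcases hitP_mem D g n with hm | hm
    · have : (hitP D g n, f (hitP D g n)) ∉ D := by rw [h _ hlt]; exact hm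
      exact hitP_le_of_notMem _ this
    · omega
  · rw [heq]; exact hitP_le D f n

lemma hitP_congr {D : Set (ℕ × α)} {f g : ℕ → α} {n : ℕ}
    (h : ∀ t < n, f t = g t) : hitP D f n = hitP D g n :=
  le_antisymm (hitP_le_hitP h) (hitP_le_hitP fun t ht => (h t ht).symm)

lemma rhitP_le (D : Set (ℕ × α)) (f : ℕ → α) (T : ℕ) : rhitP D f T ≤ T :=
  Nat.sInf_le (Or.inr rfl)

lemma rhitP_mem (D : Set (ℕ × α)) (f : ℕ → α) (T : ℕ) :
    (T - rhitP D f T, f (rhitP D f T)) ∉ D ∨ rhitP D f T = T := by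
  have h := Nat.sInf_mem (⟨T, Or.inr rfl⟩ : Set.Nonempty ({t | (T - t, f t) ∉ D} ∪ {T}))
  simpa [hitP, rhitP, Set.mem_union, Set.mem_setOf_eq, Set.mem_singleton_iff, or_comm] using h

lemma mem_of_lt_rhitP {D : Set (ℕ × α)} {f : ℕ → α} {T t : ℕ} (h : t < rhitP D f T) :
    (T - t, f t) ∈ D := by
  have h2 := Nat.notMem_of_lt_sInf (h : t < sInf _)
  by_contra hc
  exact h2 (Or.inl hc)

lemma rhitP_le_of_notMem {D : Set (ℕ × α)} {f : ℕ → α} {T t : ℕ} (h : (T - t, f t) ∉ D) :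
    rhitP D f T ≤ t := Nat.sInf_le (Or.inl h)

lemma min_rhitP_le {D : Set (ℕ × α)} {f g : ℕ → α} {T s : ℕ} (hsT : s ≤ T)
    (h : ∀ t < s, f t = g t) :
    min (rhitP D f T) s ≤ min (rhitP D g T) s := by
  rcases le_or_gt s (rhitP D g T) with hge | hlt
  · omega
  · rcases rhitP_mem D g T with hm | hm
    · have hfg : (T - rhitP D g T, f (rhitP D g T)) ∉ D := by rw [h _ (by omega)]; exact hm
      have := rhitP_le_of_notMem hfg
      omega
    · omega

lemma min_rhitP_congr {D : Set (ℕ × α)} {f g : ℕ → α} {T s : ℕ} (hsT : s ≤ T)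
    (h : ∀ t < s, f t = g t) :
    min (rhitP D f T) s = min (rhitP D g T) s :=
  le_antisymm (min_rhitP_le hsT h) (min_rhitP_le hsT fun t ht => (h t ht).symm)

lemma hitP_succ_of_exit {D : Set (ℕ × α)} {f : ℕ → α} {n : ℕ}
    (h : (hitP D f n, f (hitP D f n)) ∉ D) :
    hitP D f (n + 1) = hitP D f n := by
  apply le_antisymm (hitP_le_of_notMem _ h)
  by_contra hc
  push_neg at hc
  rcases hitP_mem D f (n + 1) with hm | hm
  · exact hm (mem_of_lt_hitP hc)
  · have := hitP_le D f n; omega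

lemma hitP_succ_of_stay {D : Set (ℕ × α)} {f : ℕ → α} {n : ℕ}
    (h : ∀ u ≤ n, (u, f u) ∈ D) : hitP D f (n + 1) = n + 1 := by
  apply le_antisymm (hitP_le _ _ _)
  by_contra hc
  push_neg at hc
  rcases hitP_mem D f (n + 1) with hm | hm
  · exact hm (h _ (by omega))
  · omega

lemma hitP_eq_self_of_stay {D : Set (ℕ × α)} {f : ℕ → α} {n : ℕ}
    (h : ∀ u ≤ n, (u, f u) ∈ D) : hitP D f n = n := by
  rcases hitP_mem D f n with hm | hm
  · exact absurd (h _ (hitP_le D f n)) hm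
  · exact hm

lemma hitP_exit_of_not_stay {D : Set (ℕ × α)} {f : ℕ → α} {n : ℕ}
    (h : ¬ ∀ u ≤ n, (u, f u) ∈ D) :
    (hitP D f n, f (hitP D f n)) ∉ D := by
  push_neg at h
  obtain ⟨u, hu, hD'⟩ := h
  have h1 : hitP D f n ≤ u := hitP_le_of_notMem _ hD'
  rcases hitP_mem D f n with hm | hm
  · exact hm
  · have : u = n := by omega
    rw [hm, ← this]; exact hD'

end PureAux

/-- pure walk -/
def Xw (x : ℤ) (a : ℕ → ℤ) (t : ℕ) : ℤ := x + ∑ i ∈ Finset.range t, a i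

lemma Xw_congr {x : ℤ} {a b : ℕ → ℤ} {t : ℕ} (h : ∀ i < t, a i = b i) :
    Xw x a t = Xw x b t := by
  unfold Xw
  congr 1
  exact Finset.sum_congr rfl fun i hi => h i (Finset.mem_range.mp hi)

lemma Xw_succ (x : ℤ) (a : ℕ → ℤ) (t : ℕ) : Xw x a (t + 1) = Xw x a t + a t := by
  unfold Xw
  rw [Finset.sum_range_succ]
  ring

lemma abs_Xw_le {x : ℤ} {a : ℕ → ℤ} {t T : ℕ} (ht : t ≤ T) (h : ∀ i < T, |a i| ≤ 1) :
    |Xw x a t| ≤ |x| + T := by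
  unfold Xw
  calc |x + ∑ i ∈ Finset.range t, a i| ≤ |x| + |∑ i ∈ Finset.range t, a i| := abs_add_le _ _
    _ ≤ |x| + ∑ i ∈ Finset.range t, |a i| := by
        gcongr; exact Finset.abs_sum_le_sum_abs _ _
    _ ≤ |x| + ∑ _i ∈ Finset.range t, (1 : ℤ) := by
        gcongr with i hi
        exact h i (lt_of_lt_of_le (Finset.mem_range.mp hi) ht)
    _ ≤ |x| + T := by simp; omega

/-- the reversed hitting time as a function of the increments of `Y` -/
def tauP (D : Set (ℕ × ℤ)) (T : ℕ) (y : ℤ) (b : ℕ → ℤ) : ℕ := rhitP D (Xw y b) T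

open scoped Classical in
/-- `|X_{σ_s} − Y_{τ*_s}|` as a function of the start point and increments -/
def fL1 (D : Set (ℕ × ℤ)) (T : ℕ) (y : ℤ) (s : ℕ) (x : ℤ) (a b : ℕ → ℤ) : ℝ :=
  ((|Xw x a (hitP D (Xw x a) (T - min (tauP D T y b) s)) -
      Xw y b (min (tauP D T y b) s)| : ℤ) : ℝ)

open scoped Classical in
def fR1 (D : Set (ℕ × ℤ)) (T : ℕ) (y : ℤ) (s : ℕ) (x : ℤ) (a b : ℕ → ℤ) : ℝ :=
  ((|Xw x a (hitP D (Xw x a) (T - min (tauP D T y b) s)) -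
      Xw y b (min (tauP D T y b) (s - 1))| : ℤ) : ℝ)
  + (if Xw x a (hitP D (Xw x a) (T - min (tauP D T y b) s)) =
        Xw y b (min (tauP D T y b) (s - 1)) ∧ s ≤ tauP D T y b
      then (1 : ℝ) else 0)

open scoped Classical in
def fL2 (D : Set (ℕ × ℤ)) (T : ℕ) (y : ℤ) (s : ℕ) (x : ℤ) (a b : ℕ → ℤ) : ℝ :=
  ((|Xw x a (hitP D (Xw x a) (T - min (tauP D T y b) (s - 1))) -
      Xw y b (min (tauP D T y b) (s - 1))| : ℤ) : ℝ)

open scoped Classical in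
def fR2 (D : Set (ℕ × ℤ)) (T : ℕ) (y : ℤ) (s : ℕ) (x : ℤ) (a b : ℕ → ℤ) : ℝ :=
  ((|Xw x a (hitP D (Xw x a) (T - min (tauP D T y b) s)) -
      Xw y b (min (tauP D T y b) (s - 1))| : ℤ) : ℝ)
  + (if Xw x a (hitP D (Xw x a) (T - min (tauP D T y b) s)) =
        Xw y b (min (tauP D T y b) (s - 1)) ∧ s ≤ tauP D T y b
        ∧ (∀ u, u ≤ T - s → (u, Xw x a u) ∈ D)
      then (1 : ℝ) else 0)

/-- the automatic-containment statement (part 3), pure form -/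
lemma key3 {D : Set (ℕ × ℤ)} (hD : IsRootCont D) {T s : ℕ} (hs0 : 0 < s) (hsT : s < T)
    {y x : ℤ} {a b : ℕ → ℤ}
    (hEq : Xw x a (hitP D (Xw x a) (T - min (tauP D T y b) s)) =
      Xw y b (min (tauP D T y b) (s - 1)))
    (hτ : s ≤ tauP D T y b) :
    ∀ u, u ≤ T - s → (u, Xw x a u) ∈ D := by
  have hτ' : s ≤ rhitP D (Xw y b) T := hτ
  have hms : min (tauP D T y b) s = s := by omega
  have hms' : min (tauP D T y b) (s - 1) = s - 1 := by omega
  rw [hms, hms'] at hEq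
  have hY : (T - (s - 1), Xw y b (s - 1)) ∈ D :=
    mem_of_lt_rhitP (by omega : s - 1 < rhitP D (Xw y b) T)
  have hT1 : T - (s - 1) = (T - s) + 1 := by omega
  rw [hT1] at hY
  have hXh : (hitP D (Xw x a) (T - s), Xw x a (hitP D (Xw x a) (T - s))) ∈ D := by
    rw [hEq]
    exact hD _ _ hY _ (by have := hitP_le D (Xw x a) (T - s); omega)
  have hj : hitP D (Xw x a) (T - s) = T - s := by
    rcases hitP_mem D (Xw x a) (T - s) with hm | hm
    · exact absurd hXh hm
    · exact hm
  intro u hu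
  rcases lt_or_eq_of_le hu with hlt | heq
  · exact mem_of_lt_hitP (n := T - s) (by omega)
  · rw [heq, ← hj]; exact hXh

/-- integer absolute-value identity behind the one-step switching -/
lemma abs_pm (z : ℤ) :
    ((|z + 1| : ℤ) : ℝ) + ((|z - 1| : ℤ) : ℝ)
      = (((|z| : ℤ) : ℝ) + (if z = 0 then (1 : ℝ) else 0))
        + (((|z| : ℤ) : ℝ) + (if z = 0 then (1 : ℝ) else 0)) := by
  rcases lt_trichotomy z 0 with h | h | h
  · rw [if_neg (by omega), abs_of_nonpos (by omega), abs_of_neg (by omega),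
      abs_of_neg h]
    push_cast; ring
  · subst h; norm_num
  · rw [if_neg (by omega), abs_of_pos (by omega), abs_of_nonneg (by omega),
      abs_of_pos h]
    push_cast; ring

open scoped Classical in
lemma key2 {D : Set (ℕ × ℤ)} (hD : IsRootCont D) {T s : ℕ} (hs0 : 0 < s) (hsT : s < T)
    {y x : ℤ} (a b : ℕ → ℤ) :
    fL2 D T y s x (Function.update a (T - s) 1) b
      + fL2 D T y s x (Function.update a (T - s) (-1)) b
    = fR2 D T y s x (Function.update a (T - s) 1) b
      + fR2 D T y s x (Function.update a (T - s) (-1)) b := by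
  set a₁ := Function.update a (T - s) 1 with ha₁
  set a₂ := Function.update a (T - s) (-1) with ha₂
  set τ := tauP D T y b with hτdef
  by_cases hτ : s ≤ τ
  · have hms : min τ s = s := by omega
    have hms' : min τ (s - 1) = s - 1 := by omega
    have hjT : T - (s - 1) = (T - s) + 1 := by omega
    have hX12 : ∀ t, t ≤ T - s → Xw x a₁ t = Xw x a₂ t := by
      intro t ht
      refine Xw_congr fun i hi => ?_
      rw [ha₁, ha₂, Function.update_of_ne (by omega), Function.update_of_ne (by omega)]
    by_cases hQ : ∀ u, u ≤ T - s → (u, Xw x a₁ u) ∈ D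
    · -- the walk `X` stays in `D` up to time `T - s`
      have hQ2 : ∀ u, u ≤ T - s → (u, Xw x a₂ u) ∈ D := fun u hu =>
        (hX12 u hu) ▸ hQ u hu
      have h1j : hitP D (Xw x a₁) (T - s) = T - s := hitP_eq_self_of_stay fun u hu => hQ u hu
      have h2j : hitP D (Xw x a₂) (T - s) = T - s := hitP_eq_self_of_stay fun u hu => hQ2 u hu
      have h1j' : hitP D (Xw x a₁) ((T - s) + 1) = (T - s) + 1 :=
        hitP_succ_of_stay fun u hu => hQ u hu
      have h2j' : hitP D (Xw x a₂) ((T - s) + 1) = (T - s) + 1 :=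
        hitP_succ_of_stay fun u hu => hQ2 u hu
      have hXs1 : Xw x a₁ ((T - s) + 1) = Xw x a₁ (T - s) + 1 := by
        rw [Xw_succ, ha₁, Function.update_self]
      have hXs2 : Xw x a₂ ((T - s) + 1) = Xw x a₂ (T - s) - 1 := by
        rw [Xw_succ, ha₂, Function.update_self]; ring
      have hXX : Xw x a₂ (T - s) = Xw x a₁ (T - s) := (hX12 _ le_rfl).symm
      unfold fL2 fR2
      rw [← hτdef, hms, hms', hjT, h1j', h2j', h1j, h2j, hXs1, hXs2, hXX]
      have hcond1 : (Xw x a₁ (T - s) = Xw y b (s - 1) ∧ s ≤ τ ∧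
          (∀ u, u ≤ T - s → (u, Xw x a₁ u) ∈ D)) ↔
          (Xw x a₁ (T - s) - Xw y b (s - 1) = 0) := by
        constructor
        · rintro ⟨h1, -, -⟩; omega
        · intro h1; exact ⟨by omega, hτ, hQ⟩
      have hcond2 : (Xw x a₁ (T - s) = Xw y b (s - 1) ∧ s ≤ τ ∧
          (∀ u, u ≤ T - s → (u, Xw x a₂ u) ∈ D)) ↔
          (Xw x a₁ (T - s) - Xw y b (s - 1) = 0) := by
        constructor
        · rintro ⟨h1, -, -⟩; omega
        · intro h1; exact ⟨by omega, hτ, hQ2⟩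
      rw [if_congr hcond1 rfl rfl, if_congr hcond2 rfl rfl]
      have e1 : Xw x a₁ (T - s) + 1 - Xw y b (s - 1) =
          (Xw x a₁ (T - s) - Xw y b (s - 1)) + 1 := by ring
      have e2 : Xw x a₁ (T - s) - 1 - Xw y b (s - 1) =
          (Xw x a₁ (T - s) - Xw y b (s - 1)) - 1 := by ring
      rw [e1, e2]
      exact abs_pm _
    · -- the walk `X` exits `D` before time `T - s`
      have hQ2 : ¬ ∀ u, u ≤ T - s → (u, Xw x a₂ u) ∈ D := by
        intro hc; exact hQ fun u hu => (hX12 u hu).symm ▸ hc u hu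
      have hside : ∀ c : ℕ → ℤ, (¬ ∀ u, u ≤ T - s → (u, Xw x c u) ∈ D) →
          fL2 D T y s x c b = fR2 D T y s x c b := by
        intro c hc
        have hE := hitP_exit_of_not_stay (n := T - s) (f := Xw x c) (D := D)
          (by intro hcc; exact hc fun u hu => hcc u hu)
        have h1' : hitP D (Xw x c) ((T - s) + 1) = hitP D (Xw x c) (T - s) :=
          hitP_succ_of_exit hE
        unfold fL2 fR2
        rw [← hτdef, hms, hms', hjT, h1', if_neg (by rintro ⟨-, -, hc3⟩; exact hc hc3)]
        ring
      rw [hside a₁ hQ, hside a₂ hQ2]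
  · -- `τ* < s`: nothing happens at this step
    have hmm : min τ (s - 1) = min τ s := by omega
    have hside : ∀ c : ℕ → ℤ, fL2 D T y s x c b = fR2 D T y s x c b := by
      intro c
      unfold fL2 fR2
      rw [← hτdef, hmm, if_neg (by rintro ⟨-, hc2, -⟩; exact hτ hc2)]
      ring
    rw [hside a₁, hside a₂]

open scoped Classical in
lemma key1 {D : Set (ℕ × ℤ)} {T s : ℕ} (hs0 : 0 < s) (hsT : s < T)
    {y x : ℤ} (a b : ℕ → ℤ) :
    fL1 D T y s x a (Function.update b (s - 1) 1)
      + fL1 D T y s x a (Function.update b (s - 1) (-1))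
    = fR1 D T y s x a (Function.update b (s - 1) 1)
      + fR1 D T y s x a (Function.update b (s - 1) (-1)) := by
  set b₁ := Function.update b (s - 1) 1 with hb₁
  set b₂ := Function.update b (s - 1) (-1) with hb₂
  have hYagree : ∀ t, t < s → Xw y b₁ t = Xw y b₂ t := by
    intro t ht
    refine Xw_congr fun i hi => ?_
    rw [hb₁, hb₂, Function.update_of_ne (by omega), Function.update_of_ne (by omega)]
  have hmin : min (rhitP D (Xw y b₁) T) s = min (rhitP D (Xw y b₂) T) s :=
    min_rhitP_congr (le_of_lt hsT) hYagree
  have hmin' : min (rhitP D (Xw y b₁) T) (s - 1) = min (rhitP D (Xw y b₂) T) (s - 1) :=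
    min_rhitP_congr (by omega) (fun t ht => hYagree t (by omega))
  have hτ₁ : tauP D T y b₁ = rhitP D (Xw y b₁) T := rfl
  have hτ₂ : tauP D T y b₂ = rhitP D (Xw y b₂) T := rfl
  by_cases hτ : s ≤ rhitP D (Xw y b₁) T
  · have hτ2 : s ≤ rhitP D (Xw y b₂) T := by omega
    have hm1 : min (tauP D T y b₁) s = s := by rw [hτ₁]; omega
    have hm2 : min (tauP D T y b₂) s = s := by rw [hτ₂]; omega
    have hm1' : min (tauP D T y b₁) (s - 1) = s - 1 := by rw [hτ₁]; omega
    have hm2' : min (tauP D T y b₂) (s - 1) = s - 1 := by rw [hτ₂]; omega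
    have hb1s : Xw y b₁ s = Xw y b₁ (s - 1) + 1 := by
      have h := Xw_succ y b₁ (s - 1)
      rw [show s - 1 + 1 = s from by omega] at h
      rw [h, hb₁, Function.update_self]
    have hb2s : Xw y b₂ s = Xw y b₁ (s - 1) - 1 := by
      have h := Xw_succ y b₂ (s - 1)
      rw [show s - 1 + 1 = s from by omega] at h
      rw [h, hb₂, Function.update_self, ← hYagree (s - 1) (by omega)]
      ring
    unfold fL1 fR1
    rw [hm1, hm2, hm1', hm2', hb1s, hb2s]
    rw [← hYagree (s - 1) (by omega)]
    set X := Xw x a (hitP D (Xw x a) (T - s)) with hX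
    set V := Xw y b₁ (s - 1) with hV
    have hcond1 : (X = V ∧ s ≤ tauP D T y b₁) ↔ (X - V = 0) := by
      constructor
      · rintro ⟨h1, -⟩; omega
      · intro h1; exact ⟨by omega, by rw [hτ₁]; exact hτ⟩
    have hcond2 : (X = V ∧ s ≤ tauP D T y b₂) ↔ (X - V = 0) := by
      constructor
      · rintro ⟨h1, -⟩; omega
      · intro h1; exact ⟨by omega, by rw [hτ₂]; exact hτ2⟩
    rw [if_congr hcond1 rfl rfl, if_congr hcond2 rfl rfl]
    have e1 : X - (V + 1) = (X - V) - 1 := by ring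
    have e2 : X - (V - 1) = (X - V) + 1 := by ring
    rw [e1, e2]
    linarith [abs_pm (X - V)]
  · have hτ2 : ¬ s ≤ rhitP D (Xw y b₂) T := by omega
    have hside : ∀ c : ℕ → ℤ, ¬ s ≤ rhitP D (Xw y c) T →
        fL1 D T y s x a c = fR1 D T y s x a c := by
      intro c hc
      have hmm : min (tauP D T y c) (s - 1) = min (tauP D T y c) s := by
        have : tauP D T y c = rhitP D (Xw y c) T := rfl
        rw [this]; omega
      unfold fL1 fR1
      rw [hmm, if_neg (fun hcc => hc hcc.2)]
      ring
    rw [hside b₁ hτ, hside b₂ hτ2]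

section Congr

variable {D : Set (ℕ × ℤ)} {T s : ℕ} {y x : ℤ} {a a' b b' : ℕ → ℤ}

lemma tau_min_congr (hsT : s < T) (hb : ∀ i, i < T → b i = b' i) (r : ℕ) (hr : r ≤ s) :
    min (tauP D T y b) r = min (tauP D T y b') r :=
  min_rhitP_congr (by omega) (fun t ht => Xw_congr fun i hi => hb i (by omega))

lemma tau_le_iff_congr (hs0 : 0 < s) (hsT : s < T) (hb : ∀ i, i < T → b i = b' i) :
    (s ≤ tauP D T y b) ↔ (s ≤ tauP D T y b') := by
  have h := tau_min_congr (y := y) (D := D) hsT hb s le_rfl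
  omega

lemma hit_congr_le (hn : ∀ n, n ≤ T → True) (ha : ∀ i, i < T → a i = a' i) {n : ℕ} (hnT : n ≤ T) :
    hitP D (Xw x a) n = hitP D (Xw x a') n :=
  hitP_congr fun t ht => Xw_congr fun i hi => ha i (by omega)

lemma XwT_congr (ha : ∀ i, i < T → a i = a' i) {t : ℕ} (ht : t ≤ T) :
    Xw x a t = Xw x a' t :=
  Xw_congr fun i hi => ha i (by omega)

lemma stay_iff_congr (hsT : s < T) (ha : ∀ i, i < T → a i = a' i) :
    (∀ u, u ≤ T - s → (u, Xw x a u) ∈ D) ↔ (∀ u, u ≤ T - s → (u, Xw x a' u) ∈ D) := by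
  constructor <;> intro h u hu
  · rw [← XwT_congr (T := T) ha (by omega)]; exact h u hu
  · rw [XwT_congr (T := T) ha (by omega)]; exact h u hu

open scoped Classical in
lemma fL1_congr (hs0 : 0 < s) (hsT : s < T)
    (ha : ∀ i, i < T → a i = a' i) (hb : ∀ i, i < T → b i = b' i) :
    fL1 D T y s x a b = fL1 D T y s x a' b' := by
  unfold fL1
  rw [tau_min_congr (y := y) hsT hb s le_rfl]
  have hm : min (tauP D T y b') s ≤ s := by omega
  rw [XwT_congr (x := y) (T := T) hb (by omega),
    hit_congr_le (D := D) (x := x) (fun _ _ => trivial) ha (by omega : T - min (tauP D T y b') s ≤ T),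
    XwT_congr (T := T) ha (le_trans (hitP_le _ _ _) (by omega))]

open scoped Classical in
lemma fR1_congr (hs0 : 0 < s) (hsT : s < T)
    (ha : ∀ i, i < T → a i = a' i) (hb : ∀ i, i < T → b i = b' i) :
    fR1 D T y s x a b = fR1 D T y s x a' b' := by
  unfold fR1
  rw [tau_min_congr (y := y) hsT hb s le_rfl,
    tau_min_congr (y := y) hsT hb (s - 1) (by omega)]
  have hm : min (tauP D T y b') s ≤ s := by omega
  have hm' : min (tauP D T y b') (s - 1) ≤ s := by omega
  rw [XwT_congr (x := y) (T := T) hb (by omega : min (tauP D T y b') (s - 1) ≤ T),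
    hit_congr_le (D := D) (x := x) (fun _ _ => trivial) ha (by omega : T - min (tauP D T y b') s ≤ T),
    XwT_congr (T := T) ha (le_trans (hitP_le _ _ _) (by omega))]
  simp only [tau_le_iff_congr (y := y) hs0 hsT hb]

open scoped Classical in
lemma fL2_congr (hs0 : 0 < s) (hsT : s < T)
    (ha : ∀ i, i < T → a i = a' i) (hb : ∀ i, i < T → b i = b' i) :
    fL2 D T y s x a b = fL2 D T y s x a' b' := by
  unfold fL2
  rw [tau_min_congr (y := y) hsT hb (s - 1) (by omega)]
  have hm' : min (tauP D T y b') (s - 1) ≤ s := by omega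
  rw [XwT_congr (x := y) (T := T) hb (by omega : min (tauP D T y b') (s - 1) ≤ T),
    hit_congr_le (D := D) (x := x) (fun _ _ => trivial) ha
      (by omega : T - min (tauP D T y b') (s - 1) ≤ T),
    XwT_congr (T := T) ha (le_trans (hitP_le _ _ _) (by omega))]

open scoped Classical in
lemma fR2_congr (hs0 : 0 < s) (hsT : s < T)
    (ha : ∀ i, i < T → a i = a' i) (hb : ∀ i, i < T → b i = b' i) :
    fR2 D T y s x a b = fR2 D T y s x a' b' := by
  unfold fR2
  rw [tau_min_congr (y := y) hsT hb s le_rfl,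
    tau_min_congr (y := y) hsT hb (s - 1) (by omega)]
  have hm : min (tauP D T y b') s ≤ s := by omega
  have hm' : min (tauP D T y b') (s - 1) ≤ s := by omega
  rw [XwT_congr (x := y) (T := T) hb (by omega : min (tauP D T y b') (s - 1) ≤ T),
    hit_congr_le (D := D) (x := x) (fun _ _ => trivial) ha (by omega : T - min (tauP D T y b') s ≤ T),
    XwT_congr (T := T) ha (le_trans (hitP_le _ _ _) (by omega))]
  simp only [tau_le_iff_congr (y := y) hs0 hsT hb,
    stay_iff_congr (D := D) hsT ha]

end Congr

section Bounds

variable {D : Set (ℕ × ℤ)} {T s : ℕ} {y x : ℤ} {a b : ℕ → ℤ}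

lemma core_bound (ha : ∀ i, i < T → |a i| ≤ 1) (hb : ∀ i, i < T → |b i| ≤ 1)
    {t u : ℕ} (ht : t ≤ T) (hu : u ≤ T) :
    ((|Xw x a t - Xw y b u| : ℤ) : ℝ) ≤ |(x : ℝ)| + |(y : ℝ)| + 2 * T := by
  have h1 : |Xw x a t| ≤ |x| + T := abs_Xw_le ht (fun i hi => ha i hi)
  have h2 : |Xw y b u| ≤ |y| + T := abs_Xw_le hu (fun i hi => hb i hi)
  have h3 : |Xw x a t - Xw y b u| ≤ (|x| + T) + (|y| + T) :=
    le_trans (abs_sub _ _) (by omega)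
  calc ((|Xw x a t - Xw y b u| : ℤ) : ℝ) ≤ (((|x| + T) + (|y| + T) : ℤ) : ℝ) := by
        exact_mod_cast h3
    _ = |(x : ℝ)| + |(y : ℝ)| + 2 * T := by push_cast; ring

lemma fL1_bound (hs0 : 0 < s) (hsT : s < T)
    (ha : ∀ i, i < T → |a i| ≤ 1) (hb : ∀ i, i < T → |b i| ≤ 1) :
    |fL1 D T y s x a b| ≤ |(x : ℝ)| + |(y : ℝ)| + 2 * T + 1 := by
  unfold fL1
  rw [abs_of_nonneg (by positivity)]
  have := core_bound (y := y) (x := x)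
    (t := hitP D (Xw x a) (T - min (tauP D T y b) s)) (u := min (tauP D T y b) s) ha hb
    (le_trans (hitP_le D (Xw x a) _) (by omega)) (by omega)
  linarith

lemma fL2_bound (hs0 : 0 < s) (hsT : s < T)
    (ha : ∀ i, i < T → |a i| ≤ 1) (hb : ∀ i, i < T → |b i| ≤ 1) :
    |fL2 D T y s x a b| ≤ |(x : ℝ)| + |(y : ℝ)| + 2 * T + 1 := by
  unfold fL2
  rw [abs_of_nonneg (by positivity)]
  have := core_bound (y := y) (x := x)
    (t := hitP D (Xw x a) (T - min (tauP D T y b) (s - 1))) (u := min (tauP D T y b) (s - 1)) ha hb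
    (le_trans (hitP_le D (Xw x a) _) (by omega)) (by omega)
  linarith

open scoped Classical in
lemma fR1_bound (hs0 : 0 < s) (hsT : s < T)
    (ha : ∀ i, i < T → |a i| ≤ 1) (hb : ∀ i, i < T → |b i| ≤ 1) :
    |fR1 D T y s x a b| ≤ |(x : ℝ)| + |(y : ℝ)| + 2 * T + 1 := by
  unfold fR1
  have hind : (0 : ℝ) ≤ (if Xw x a (hitP D (Xw x a) (T - min (tauP D T y b) s)) =
        Xw y b (min (tauP D T y b) (s - 1)) ∧ s ≤ tauP D T y b then (1 : ℝ) else 0) ∧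
      (if Xw x a (hitP D (Xw x a) (T - min (tauP D T y b) s)) =
        Xw y b (min (tauP D T y b) (s - 1)) ∧ s ≤ tauP D T y b then (1 : ℝ) else 0) ≤ 1 := by
    split <;> norm_num
  rw [abs_of_nonneg (by positivity)]
  have := core_bound (y := y) (x := x)
    (t := hitP D (Xw x a) (T - min (tauP D T y b) s)) (u := min (tauP D T y b) (s - 1)) ha hb
    (le_trans (hitP_le D (Xw x a) _) (by omega)) (by omega)
  linarith [hind.1, hind.2]

open scoped Classical in
lemma fR2_bound (hs0 : 0 < s) (hsT : s < T)
    (ha : ∀ i, i < T → |a i| ≤ 1) (hb : ∀ i, i < T → |b i| ≤ 1) :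
    |fR2 D T y s x a b| ≤ |(x : ℝ)| + |(y : ℝ)| + 2 * T + 1 := by
  unfold fR2
  have hind : (0 : ℝ) ≤ (if Xw x a (hitP D (Xw x a) (T - min (tauP D T y b) s)) =
        Xw y b (min (tauP D T y b) (s - 1)) ∧ s ≤ tauP D T y b
        ∧ (∀ u, u ≤ T - s → (u, Xw x a u) ∈ D) then (1 : ℝ) else 0) ∧
      (if Xw x a (hitP D (Xw x a) (T - min (tauP D T y b) s)) =
        Xw y b (min (tauP D T y b) (s - 1)) ∧ s ≤ tauP D T y b
        ∧ (∀ u, u ≤ T - s → (u, Xw x a u) ∈ D) then (1 : ℝ) else 0) ≤ 1 := by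
    split <;> norm_num
  rw [abs_of_nonneg (by positivity)]
  have := core_bound (y := y) (x := x)
    (t := hitP D (Xw x a) (T - min (tauP D T y b) s)) (u := min (tauP D T y b) (s - 1)) ha hb
    (le_trans (hitP_le D (Xw x a) _) (by omega)) (by omega)
  linarith [hind.1, hind.2]

end Bounds

section Coin

open scoped ENNReal

lemma fairSign_union_one {P : Measure Ω} [IsProbabilityMeasure P] {c : Ω → ℤ}
    (hc : Measurable c) (hfair : FairSign P c) :
    P ({ω | c ω = 1} ∪ {ω | c ω = -1}) = 1 := by
  have h1 : P {ω | c ω = 1} = 1/2 := hfair.1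
  have h2 : P {ω | c ω = -1} = 1/2 := hfair.2
  have hm : MeasurableSet {ω | c ω = -1} := hc (measurableSet_singleton (-1))
  have hd : Disjoint {ω | c ω = 1} {ω | c ω = -1} := by
    rw [Set.disjoint_left]
    intro ω hω1 hω2
    simp only [Set.mem_setOf_eq] at hω1 hω2
    omega
  rw [measure_union hd hm, h1, h2, ENNReal.div_add_div_same, one_add_one_eq_two]
  exact ENNReal.div_self (by norm_num) (by norm_num)

lemma fairSign_compl_null {P : Measure Ω} [IsProbabilityMeasure P] {c : Ω → ℤ}
    (hc : Measurable c) (hfair : FairSign P c) :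
    P ({ω | c ω = 1} ∪ {ω | c ω = -1})ᶜ = 0 := by
  have hms : MeasurableSet ({ω | c ω = 1} ∪ {ω | c ω = -1}) :=
    (hc (measurableSet_singleton 1)).union (hc (measurableSet_singleton (-1)))
  rw [measure_compl hms (measure_ne_top _ _), fairSign_union_one hc hfair, measure_univ]
  simp

lemma map_singleton_eq {P : Measure Ω} [IsProbabilityMeasure P] {c : Ω → ℤ}
    (hc : Measurable c) (hfair : FairSign P c) (k : ℤ) :
    (P.map c) {k} = if k = 1 ∨ k = -1 then 1/2 else 0 := by
  rw [Measure.map_apply hc (measurableSet_singleton k)]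
  rcases Classical.em (k = 1 ∨ k = -1) with h | h
  · rw [if_pos h]
    rcases h with h | h <;> subst h
    · exact hfair.1
    · exact hfair.2
  · rw [if_neg h]
    refine measure_mono_null ?_ (fairSign_compl_null hc hfair)
    intro ω hω
    simp only [Set.mem_preimage, Set.mem_singleton_iff] at hω
    simp only [Set.mem_compl_iff, Set.mem_union, Set.mem_setOf_eq]
    omega

/-- Integrating out a fair coin independent of everything else. -/
lemma coin_split {γ : Type*} [MeasurableSpace γ] [Countable γ] [MeasurableSingletonClass γ]
    (P : Measure Ω) [IsProbabilityMeasure P]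
    (c : Ω → ℤ) (hc : Measurable c) (hfair : FairSign P c)
    (G : Ω → γ) (hG : Measurable G) (hind : IndepFun c G P)
    (F : ℤ → γ → ℝ)
    (hodd : ∀ v, F 1 v + F (-1) v = 0)
    (hInt : Integrable (fun ω => F (c ω) (G ω)) P)
    (hInt1 : Integrable (fun ω => F 1 (G ω)) P)
    (hInt2 : Integrable (fun ω => F (-1) (G ω)) P) :
    ∫ ω, F (c ω) (G ω) ∂P = 0 := by
  have hFu : Measurable (Function.uncurry F) := measurable_of_countable _
  have hpair : Measurable fun ω => (c ω, G ω) := hc.prodMk hG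
  have hmap : P.map (fun ω => (c ω, G ω)) = (P.map c).prod (P.map G) :=
    (indepFun_iff_map_prod_eq_prod_map_map hc.aemeasurable hG.aemeasurable).mp hind
  have h1 : ∫ ω, F (c ω) (G ω) ∂P
      = ∫ z, Function.uncurry F z ∂((P.map c).prod (P.map G)) := by
    rw [← hmap, integral_map hpair.aemeasurable hFu.aestronglyMeasurable]
    rfl
  have hIntProd : Integrable (Function.uncurry F) ((P.map c).prod (P.map G)) := by
    rw [← hmap]
    exact (integrable_map_measure hFu.aestronglyMeasurable hpair.aemeasurable).mpr hInt
  have h2 : ∫ z, Function.uncurry F z ∂((P.map c).prod (P.map G))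
      = ∫ k, (∫ v, F k v ∂(P.map G)) ∂(P.map c) := integral_prod _ hIntProd
  have hIntInner : Integrable (fun k => ∫ v, F k v ∂(P.map G)) (P.map c) :=
    hIntProd.integral_prod_left
  have h3 : ∫ k, (∫ v, F k v ∂(P.map G)) ∂(P.map c)
      = ∑' k : ℤ, ((P.map c) {k}).toReal • (∫ v, F k v ∂(P.map G)) :=
    integral_countable' hIntInner
  have h4 : (∑' k : ℤ, ((P.map c) {k}).toReal • (∫ v, F k v ∂(P.map G)))
      = ∑ k ∈ ({1, -1} : Finset ℤ), ((P.map c) {k}).toReal • (∫ v, F k v ∂(P.map G)) := by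
    refine tsum_eq_sum ?_
    intro k hk
    simp only [Finset.mem_insert, Finset.mem_singleton] at hk
    push_neg at hk
    rw [map_singleton_eq hc hfair, if_neg (by tauto)]
    simp
  have hhalf : ((1/2 : ℝ≥0∞)).toReal = (1/2 : ℝ) := by
    simp [ENNReal.toReal_div]
  have hmapG : ∀ k : ℤ, ∫ v, F k v ∂(P.map G) = ∫ ω, F k (G ω) ∂P := fun k => by
    rw [integral_map hG.aemeasurable (measurable_of_countable (F k)).aestronglyMeasurable]
  have h5 : ∫ ω, F 1 (G ω) ∂P + ∫ ω, F (-1) (G ω) ∂P = 0 := by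
    rw [← integral_add hInt1 hInt2]
    simp only [hodd]
    exact integral_zero _ _
  rw [h1, h2, h3, h4, Finset.sum_pair (by norm_num : (1 : ℤ) ≠ -1),
    map_singleton_eq hc hfair 1, map_singleton_eq hc hfair (-1),
    if_pos (by norm_num : (1:ℤ) = 1 ∨ (1:ℤ) = -1),
    if_pos (by norm_num : (-1:ℤ) = 1 ∨ (-1:ℤ) = -1),
    hmapG, hmapG, hhalf, smul_eq_mul, smul_eq_mul]
  linarith [h5]

end Coin

section MeasInt

variable {ξ η : ℕ → Ω → ℤ}

/-- truncation/extension of a finite vector of increments -/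
def ext (T : ℕ) (u : Fin T → ℤ) : ℕ → ℤ := fun i => if h : i < T then u ⟨i, h⟩ else 0

lemma ext_eq {T : ℕ} (a : ℕ → ℤ) {i : ℕ} (hi : i < T) :
    ext T (fun j : Fin T => a j) i = a i := by
  simp [ext, hi]

lemma meas_big {T : ℕ} {f : ℤ → (ℕ → ℤ) → (ℕ → ℤ) → ℝ}
    (hcongr : ∀ (x : ℤ) (a a' b b' : ℕ → ℤ), (∀ i, i < T → a i = a' i) →
      (∀ i, i < T → b i = b' i) → f x a b = f x a' b')
    (hξm : ∀ n, Measurable (ξ n)) (hηm : ∀ n, Measurable (η n)) :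
    Measurable fun p : ℤ × Ω => f p.1 (fun i => ξ i p.2) (fun i => η i p.2) := by
  have heq : (fun p : ℤ × Ω => f p.1 (fun i => ξ i p.2) (fun i => η i p.2))
      = (fun q : ℤ × ((Fin T → ℤ) × (Fin T → ℤ)) => f q.1 (ext T q.2.1) (ext T q.2.2)) ∘
        (fun p : ℤ × Ω => (p.1, ((fun i : Fin T => ξ i p.2), (fun i : Fin T => η i p.2)))) := by
    funext p
    simp only [Function.comp_apply]
    exact hcongr _ _ _ _ _ (fun i hi => (ext_eq (fun n => ξ n p.2) hi).symm)
      (fun i hi => (ext_eq (fun n => η n p.2) hi).symm)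
  rw [heq]
  refine Measurable.comp (measurable_of_countable _) ?_
  refine Measurable.prodMk measurable_fst (Measurable.prodMk ?_ ?_)
  · exact measurable_pi_lambda _ fun i => (hξm i).comp measurable_snd
  · exact measurable_pi_lambda _ fun i => (hηm i).comp measurable_snd

lemma meas_big_section {T : ℕ} {f : ℤ → (ℕ → ℤ) → (ℕ → ℤ) → ℝ}
    (hcongr : ∀ (x : ℤ) (a a' b b' : ℕ → ℤ), (∀ i, i < T → a i = a' i) →
      (∀ i, i < T → b i = b' i) → f x a b = f x a' b')
    (hξm : ∀ n, Measurable (ξ n)) (hηm : ∀ n, Measurable (η n)) (x : ℤ) :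
    Measurable fun ω : Ω => f x (fun i => ξ i ω) (fun i => η i ω) :=
  (meas_big hcongr hξm hηm).comp (measurable_const.prodMk measurable_id)

lemma good_ae {P : Measure Ω} [IsProbabilityMeasure P]
    (hξm : ∀ n, Measurable (ξ n)) (hηm : ∀ n, Measurable (η n))
    (hξf : ∀ n, FairSign P (ξ n)) (hηf : ∀ n, FairSign P (η n)) (T : ℕ) :
    ∀ᵐ ω ∂P, ∀ i, i < T →
      (ξ i ω = 1 ∨ ξ i ω = -1) ∧ (η i ω = 1 ∨ η i ω = -1) := by
  rw [ae_iff]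
  refine measure_mono_null (fun ω hω => ?_)
    (measure_iUnion_null fun i : ℕ => measure_union_null
      (fairSign_compl_null (hξm i) (hξf i)) (fairSign_compl_null (hηm i) (hηf i)))
  simp only [Set.mem_setOf_eq, not_forall] at hω
  obtain ⟨i, hi, hbad⟩ := hω
  refine Set.mem_iUnion.mpr ⟨i, ?_⟩
  simp only [Set.mem_union, Set.mem_compl_iff, Set.mem_setOf_eq]
  tauto

lemma abs_le_one_of_pm {z : ℤ} (h : z = 1 ∨ z = -1) : |z| ≤ 1 := by
  rcases h with h | h <;> simp [h]

end MeasInt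

section Inner

lemma inner2 (P : Measure Ω) [IsProbabilityMeasure P] (ξ η : ℕ → Ω → ℤ)
    (h : IndepSSRWIncrements P ξ η) (D : Set (ℕ × ℤ)) (hD : IsRootCont D)
    (T s : ℕ) (hs0 : 0 < s) (hsT : s < T) (y x : ℤ) :
    ∫ ω, fL2 D T y s x (fun i => ξ i ω) (fun i => η i ω) ∂P
      = ∫ ω, fR2 D T y s x (fun i => ξ i ω) (fun i => η i ω) ∂P := by
  obtain ⟨hξm, hηm, hξf, hηf, hind⟩ := h
  classical
  set j0 : ℕ ⊕ ℕ := Sum.inl (T - s) with hj0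
  set Tfin : Finset (ℕ ⊕ ℕ) :=
    (((Finset.range T).image Sum.inl ∪ (Finset.range T).image Sum.inr)).erase j0 with hTfin
  have hmeasSum : ∀ i, Measurable (Sum.elim ξ η i) := by
    rintro (i | i)
    exacts [hξm i, hηm i]
  have hdisj : Disjoint ({j0} : Finset (ℕ ⊕ ℕ)) Tfin := by
    simp only [Finset.disjoint_singleton_left, hTfin]
    exact Finset.notMem_erase _ _
  have hIF := hind.indepFun_finset {j0} Tfin hdisj hmeasSum
  set G : Ω → (Tfin → ℤ) := fun ω (i : Tfin) => Sum.elim ξ η i ω with hGdef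
  have hGmeas : Measurable G := measurable_pi_lambda _ fun i => hmeasSum i
  have hcG : IndepFun (ξ (T - s)) G P := by
    have h2 := hIF.comp
      (φ := fun v : ({j0} : Finset (ℕ ⊕ ℕ)) → ℤ => v ⟨j0, Finset.mem_singleton_self j0⟩)
      (ψ := id) (measurable_pi_apply (X := fun _ => ℤ) (⟨j0, Finset.mem_singleton_self j0⟩ : ({j0} : Finset (ℕ ⊕ ℕ)))) measurable_id
    exact h2
  set embA : ℤ → (Tfin → ℤ) → ℕ → ℤ := fun k v i =>
    if i = T - s then k else if h : Sum.inl i ∈ Tfin then v ⟨Sum.inl i, h⟩ else 0 with hembA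
  set embB : (Tfin → ℤ) → ℕ → ℤ := fun v i =>
    if h : Sum.inr i ∈ Tfin then v ⟨Sum.inr i, h⟩ else 0 with hembB
  have hmemA : ∀ i, i < T → i ≠ T - s → Sum.inl i ∈ Tfin := by
    intro i hi hts
    simp only [hTfin, Finset.mem_erase, Finset.mem_union, Finset.mem_image, hj0]
    exact ⟨by simp [hts], Or.inl ⟨i, Finset.mem_range.mpr hi, rfl⟩⟩
  have hmemB : ∀ i, i < T → Sum.inr i ∈ Tfin := by
    intro i hi
    simp only [hTfin, Finset.mem_erase, Finset.mem_union, Finset.mem_image, hj0]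
    exact ⟨by simp, Or.inr ⟨i, Finset.mem_range.mpr hi, rfl⟩⟩
  have hAG : ∀ (k : ℤ) (ω : Ω) (i : ℕ), i < T → i ≠ T - s → embA k (G ω) i = ξ i ω := by
    intro k ω i hi hts
    simp only [hembA, if_neg hts, hGdef, dif_pos (hmemA i hi hts)]
    rfl
  have hBG : ∀ (ω : Ω) (i : ℕ), i < T → embB (G ω) i = η i ω := by
    intro ω i hi
    simp only [hembB, hGdef, dif_pos (hmemB i hi)]
    rfl
  have hAagree : ∀ ω : Ω, ∀ i, i < T → embA (ξ (T - s) ω) (G ω) i = ξ i ω := by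
    intro ω i hi
    by_cases hts : i = T - s
    · subst hts; simp [hembA]
    · exact hAG _ ω i hi hts
  set F : ℤ → (Tfin → ℤ) → ℝ := fun k v =>
    fL2 D T y s x (embA k v) (embB v) - fR2 D T y s x (embA k v) (embB v) with hF
  have hpoint : ∀ ω, F (ξ (T - s) ω) (G ω)
      = fL2 D T y s x (fun i => ξ i ω) (fun i => η i ω)
        - fR2 D T y s x (fun i => ξ i ω) (fun i => η i ω) := by
    intro ω
    simp only [hF]
    rw [fL2_congr hs0 hsT (hAagree ω) (hBG ω), fR2_congr hs0 hsT (hAagree ω) (hBG ω)]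
  have hodd : ∀ v, F 1 v + F (-1) v = 0 := by
    intro v
    have hupd : ∀ k : ℤ, embA k v = Function.update (embA 0 v) (T - s) k := by
      intro k
      funext i
      by_cases hts : i = T - s
      · subst hts; simp [hembA, Function.update_self]
      · simp [hembA, if_neg hts, Function.update_of_ne hts]
    have hk := key2 (y := y) (x := x) hD hs0 hsT (embA 0 v) (embB v)
    simp only [hF, hupd 1, hupd (-1)]
    linarith [hk]
  have hgood := good_ae (P := P) hξm hηm hξf hηf T
  have hIL : Integrable (fun ω => fL2 D T y s x (fun i => ξ i ω) (fun i => η i ω)) P := by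
    refine Integrable.mono' (integrable_const (|(x : ℝ)| + |(y : ℝ)| + 2 * T + 1)) ?_ ?_
    · exact (meas_big_section (fun x a a' b b' ha hb => fL2_congr hs0 hsT ha hb)
        hξm hηm x).aestronglyMeasurable
    · filter_upwards [hgood] with ω hω
      rw [Real.norm_eq_abs]
      exact fL2_bound hs0 hsT (fun i hi => abs_le_one_of_pm (hω i hi).1)
        (fun i hi => abs_le_one_of_pm (hω i hi).2)
  have hIR : Integrable (fun ω => fR2 D T y s x (fun i => ξ i ω) (fun i => η i ω)) P := by
    refine Integrable.mono' (integrable_const (|(x : ℝ)| + |(y : ℝ)| + 2 * T + 1)) ?_ ?_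
    · exact (meas_big_section (fun x a a' b b' ha hb => fR2_congr hs0 hsT ha hb)
        hξm hηm x).aestronglyMeasurable
    · filter_upwards [hgood] with ω hω
      rw [Real.norm_eq_abs]
      exact fR2_bound hs0 hsT (fun i hi => abs_le_one_of_pm (hω i hi).1)
        (fun i hi => abs_le_one_of_pm (hω i hi).2)
  have hInt : Integrable (fun ω => F (ξ (T - s) ω) (G ω)) P := by
    have he : (fun ω => F (ξ (T - s) ω) (G ω))
        = fun ω => fL2 D T y s x (fun i => ξ i ω) (fun i => η i ω)
          - fR2 D T y s x (fun i => ξ i ω) (fun i => η i ω) := funext hpoint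
    rw [he]
    exact hIL.sub hIR
  have hIntk : ∀ k : ℤ, |k| ≤ 1 → Integrable (fun ω => F k (G ω)) P := by
    intro k hk
    refine Integrable.mono'
      (integrable_const ((|(x : ℝ)| + |(y : ℝ)| + 2 * T + 1) + (|(x : ℝ)| + |(y : ℝ)| + 2 * T + 1)))
      ((measurable_of_countable (F k)).comp hGmeas).aestronglyMeasurable ?_
    filter_upwards [hgood] with ω hω
    have ha : ∀ i, i < T → |embA k (G ω) i| ≤ 1 := by
      intro i hi
      by_cases hts : i = T - s
      · subst hts; simpa [hembA] using hk
      · rw [hAG k ω i hi hts]; exact abs_le_one_of_pm (hω i hi).1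
    have hb : ∀ i, i < T → |embB (G ω) i| ≤ 1 := by
      intro i hi
      rw [hBG ω i hi]; exact abs_le_one_of_pm (hω i hi).2
    rw [Real.norm_eq_abs, hF]
    refine le_trans (abs_sub _ _) ?_
    exact add_le_add (fL2_bound hs0 hsT ha hb) (fR2_bound hs0 hsT ha hb)
  have hzero := coin_split P (ξ (T - s)) (hξm _) (hξf _) G hGmeas hcG F hodd hInt
    (hIntk 1 (by norm_num)) (hIntk (-1) (by norm_num))
  have he : (fun ω => F (ξ (T - s) ω) (G ω))
      = fun ω => fL2 D T y s x (fun i => ξ i ω) (fun i => η i ω)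
        - fR2 D T y s x (fun i => ξ i ω) (fun i => η i ω) := funext hpoint
  rw [he, integral_sub hIL hIR] at hzero
  linarith

lemma inner1 (P : Measure Ω) [IsProbabilityMeasure P] (ξ η : ℕ → Ω → ℤ)
    (h : IndepSSRWIncrements P ξ η) (D : Set (ℕ × ℤ)) (hD : IsRootCont D)
    (T s : ℕ) (hs0 : 0 < s) (hsT : s < T) (y x : ℤ) :
    ∫ ω, fL1 D T y s x (fun i => ξ i ω) (fun i => η i ω) ∂P
      = ∫ ω, fR1 D T y s x (fun i => ξ i ω) (fun i => η i ω) ∂P := by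
  obtain ⟨hξm, hηm, hξf, hηf, hind⟩ := h
  classical
  set j0 : ℕ ⊕ ℕ := Sum.inr (s - 1) with hj0
  set Tfin : Finset (ℕ ⊕ ℕ) :=
    (((Finset.range T).image Sum.inl ∪ (Finset.range T).image Sum.inr)).erase j0 with hTfin
  have hmeasSum : ∀ i, Measurable (Sum.elim ξ η i) := by
    rintro (i | i)
    exacts [hξm i, hηm i]
  have hdisj : Disjoint ({j0} : Finset (ℕ ⊕ ℕ)) Tfin := by
    simp only [Finset.disjoint_singleton_left, hTfin]
    exact Finset.notMem_erase _ _
  have hIF := hind.indepFun_finset {j0} Tfin hdisj hmeasSum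
  set G : Ω → (Tfin → ℤ) := fun ω (i : Tfin) => Sum.elim ξ η i ω with hGdef
  have hGmeas : Measurable G := measurable_pi_lambda _ fun i => hmeasSum i
  have hcG : IndepFun (η (s - 1)) G P := by
    have h2 := hIF.comp
      (φ := fun v : ({j0} : Finset (ℕ ⊕ ℕ)) → ℤ => v ⟨j0, Finset.mem_singleton_self j0⟩)
      (ψ := id) (measurable_pi_apply (X := fun _ => ℤ) (⟨j0, Finset.mem_singleton_self j0⟩ : ({j0} : Finset (ℕ ⊕ ℕ)))) measurable_id
    exact h2
  set embA : (Tfin → ℤ) → ℕ → ℤ := fun v i =>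
    if h : Sum.inl i ∈ Tfin then v ⟨Sum.inl i, h⟩ else 0 with hembA
  set embB : ℤ → (Tfin → ℤ) → ℕ → ℤ := fun k v i =>
    if i = s - 1 then k else if h : Sum.inr i ∈ Tfin then v ⟨Sum.inr i, h⟩ else 0 with hembB
  have hmemA : ∀ i, i < T → Sum.inl i ∈ Tfin := by
    intro i hi
    simp only [hTfin, Finset.mem_erase, Finset.mem_union, Finset.mem_image, hj0]
    exact ⟨by simp, Or.inl ⟨i, Finset.mem_range.mpr hi, rfl⟩⟩
  have hmemB : ∀ i, i < T → i ≠ s - 1 → Sum.inr i ∈ Tfin := by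
    intro i hi hts
    simp only [hTfin, Finset.mem_erase, Finset.mem_union, Finset.mem_image, hj0]
    exact ⟨by simp [hts], Or.inr ⟨i, Finset.mem_range.mpr hi, rfl⟩⟩
  have hAG : ∀ (ω : Ω) (i : ℕ), i < T → embA (G ω) i = ξ i ω := by
    intro ω i hi
    simp only [hembA, hGdef, dif_pos (hmemA i hi)]
    rfl
  have hBG : ∀ (k : ℤ) (ω : Ω) (i : ℕ), i < T → i ≠ s - 1 → embB k (G ω) i = η i ω := by
    intro k ω i hi hts
    simp only [hembB, if_neg hts, hGdef, dif_pos (hmemB i hi hts)]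
    rfl
  have hBagree : ∀ ω : Ω, ∀ i, i < T → embB (η (s - 1) ω) (G ω) i = η i ω := by
    intro ω i hi
    by_cases hts : i = s - 1
    · subst hts; simp [hembB]
    · exact hBG _ ω i hi hts
  set F : ℤ → (Tfin → ℤ) → ℝ := fun k v =>
    fL1 D T y s x (embA v) (embB k v) - fR1 D T y s x (embA v) (embB k v) with hF
  have hpoint : ∀ ω, F (η (s - 1) ω) (G ω)
      = fL1 D T y s x (fun i => ξ i ω) (fun i => η i ω)
        - fR1 D T y s x (fun i => ξ i ω) (fun i => η i ω) := by
    intro ω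
    simp only [hF]
    rw [fL1_congr hs0 hsT (hAG ω) (hBagree ω), fR1_congr hs0 hsT (hAG ω) (hBagree ω)]
  have hodd : ∀ v, F 1 v + F (-1) v = 0 := by
    intro v
    have hupd : ∀ k : ℤ, embB k v = Function.update (embB 0 v) (s - 1) k := by
      intro k
      funext i
      by_cases hts : i = s - 1
      · subst hts; simp [hembB, Function.update_self]
      · simp [hembB, if_neg hts, Function.update_of_ne hts]
    have hk := key1 (D := D) (y := y) (x := x) hs0 hsT (embA v) (embB 0 v)
    simp only [hF, hupd 1, hupd (-1)]
    linarith [hk]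
  have hgood := good_ae (P := P) hξm hηm hξf hηf T
  have hIL : Integrable (fun ω => fL1 D T y s x (fun i => ξ i ω) (fun i => η i ω)) P := by
    refine Integrable.mono' (integrable_const (|(x : ℝ)| + |(y : ℝ)| + 2 * T + 1)) ?_ ?_
    · exact (meas_big_section (fun x a a' b b' ha hb => fL1_congr hs0 hsT ha hb)
        hξm hηm x).aestronglyMeasurable
    · filter_upwards [hgood] with ω hω
      rw [Real.norm_eq_abs]
      exact fL1_bound hs0 hsT (fun i hi => abs_le_one_of_pm (hω i hi).1)
        (fun i hi => abs_le_one_of_pm (hω i hi).2)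
  have hIR : Integrable (fun ω => fR1 D T y s x (fun i => ξ i ω) (fun i => η i ω)) P := by
    refine Integrable.mono' (integrable_const (|(x : ℝ)| + |(y : ℝ)| + 2 * T + 1)) ?_ ?_
    · exact (meas_big_section (fun x a a' b b' ha hb => fR1_congr hs0 hsT ha hb)
        hξm hηm x).aestronglyMeasurable
    · filter_upwards [hgood] with ω hω
      rw [Real.norm_eq_abs]
      exact fR1_bound hs0 hsT (fun i hi => abs_le_one_of_pm (hω i hi).1)
        (fun i hi => abs_le_one_of_pm (hω i hi).2)
  have hInt : Integrable (fun ω => F (η (s - 1) ω) (G ω)) P := by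
    have he : (fun ω => F (η (s - 1) ω) (G ω))
        = fun ω => fL1 D T y s x (fun i => ξ i ω) (fun i => η i ω)
          - fR1 D T y s x (fun i => ξ i ω) (fun i => η i ω) := funext hpoint
    rw [he]
    exact hIL.sub hIR
  have hIntk : ∀ k : ℤ, |k| ≤ 1 → Integrable (fun ω => F k (G ω)) P := by
    intro k hk
    refine Integrable.mono'
      (integrable_const ((|(x : ℝ)| + |(y : ℝ)| + 2 * T + 1) + (|(x : ℝ)| + |(y : ℝ)| + 2 * T + 1)))
      ((measurable_of_countable (F k)).comp hGmeas).aestronglyMeasurable ?_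
    filter_upwards [hgood] with ω hω
    have ha : ∀ i, i < T → |embA (G ω) i| ≤ 1 := by
      intro i hi
      rw [hAG ω i hi]; exact abs_le_one_of_pm (hω i hi).1
    have hb : ∀ i, i < T → |embB k (G ω) i| ≤ 1 := by
      intro i hi
      by_cases hts : i = s - 1
      · subst hts; simpa [hembB] using hk
      · rw [hBG k ω i hi hts]; exact abs_le_one_of_pm (hω i hi).2
    rw [Real.norm_eq_abs, hF]
    refine le_trans (abs_sub _ _) ?_
    exact add_le_add (fL1_bound hs0 hsT ha hb) (fR1_bound hs0 hsT ha hb)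
  have hzero := coin_split P (η (s - 1)) (hηm _) (hηf _) G hGmeas hcG F hodd hInt
    (hIntk 1 (by norm_num)) (hIntk (-1) (by norm_num))
  have he : (fun ω => F (η (s - 1) ω) (G ω))
      = fun ω => fL1 D T y s x (fun i => ξ i ω) (fun i => η i ω)
        - fR1 D T y s x (fun i => ξ i ω) (fun i => η i ω) := funext hpoint
  rw [he, integral_sub hIL hIR] at hzero
  linarith

end Inner

section Product

lemma integrable_comp_fst {P : Measure Ω} [IsProbabilityMeasure P]
    {lam : Measure ℤ} [IsProbabilityMeasure lam] {f : ℤ → ℝ} (hf : Integrable f lam) :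
    Integrable (fun p : ℤ × Ω => f p.1) (lam.prod P) := by
  have hmap : (lam.prod P).map Prod.fst = lam := by
    rw [Measure.map_fst_prod]
    simp
  rw [← hmap] at hf
  exact (integrable_map_measure (measurable_of_countable f).aestronglyMeasurable
    measurable_fst.aemeasurable).mp hf

lemma ae_prod_snd {P : Measure Ω} [IsProbabilityMeasure P]
    {lam : Measure ℤ} [IsProbabilityMeasure lam] {p : Ω → Prop}
    (h : ∀ᵐ ω ∂P, p ω) : ∀ᵐ q ∂(lam.prod P), p q.2 := by
  rw [ae_iff] at h ⊢
  have hz : (lam.prod P) (Set.univ ×ˢ {ω | ¬ p ω}) = 0 := by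
    rw [Measure.prod_prod, h, mul_zero]
  refine measure_mono_null (fun q hq => ?_) hz
  exact Set.mem_prod.mpr ⟨Set.mem_univ _, hq⟩

lemma big_integrable (P : Measure Ω) [IsProbabilityMeasure P]
    (lam : Measure ℤ) [IsProbabilityMeasure lam] (hlam : FiniteFirstMoment lam)
    {ξ η : ℕ → Ω → ℤ}
    (hξm : ∀ n, Measurable (ξ n)) (hηm : ∀ n, Measurable (η n))
    (hξf : ∀ n, FairSign P (ξ n)) (hηf : ∀ n, FairSign P (η n))
    {T : ℕ} {f : ℤ → (ℕ → ℤ) → (ℕ → ℤ) → ℝ} {C : ℝ}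
    (hcongr : ∀ (x : ℤ) (a a' b b' : ℕ → ℤ), (∀ i, i < T → a i = a' i) →
      (∀ i, i < T → b i = b' i) → f x a b = f x a' b')
    (hbnd : ∀ (x : ℤ) (a b : ℕ → ℤ), (∀ i, i < T → |a i| ≤ 1) → (∀ i, i < T → |b i| ≤ 1) →
      |f x a b| ≤ |(x : ℝ)| + C) :
    Integrable (fun p : ℤ × Ω => f p.1 (fun i => ξ i p.2) (fun i => η i p.2)) (lam.prod P) := by
  refine Integrable.mono' (g := fun p : ℤ × Ω => |(p.1 : ℝ)| + C) ?_
    ((meas_big hcongr hξm hηm).aestronglyMeasurable) ?_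
  · exact integrable_comp_fst (hlam.abs.add (integrable_const C))
  · filter_upwards [ae_prod_snd (P := P) (lam := lam) (good_ae hξm hηm hξf hηf T)] with q hq
    rw [Real.norm_eq_abs]
    exact hbnd _ _ _ (fun i hi => abs_le_one_of_pm (hq i hi).1)
      (fun i hi => abs_le_one_of_pm (hq i hi).2)

end Product

end Aux

open scoped Classical in
/-- for `0 < s < T`, with `τ*_s = τ* ∧ s` and
`σ_s = ρ^{Root} ∧ (T − τ*_s)`, one has
`E^λ_y[|X_{σ_s} − Y_{τ*_s}|] = E^λ_y[|X_{σ_s} − Y_{τ*_{s−1}}| + 1_{X_{σ_s} = Y_{τ*_{s−1}}, τ* ≥ s}]`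
and
`E^λ_y[|X_{σ_{s−1}} − Y_{τ*_{s−1}}|]
  = E^λ_y[|X_{σ_s} − Y_{τ*_{s−1}}| + 1_{X_{σ_s} = Y_{τ*_{s−1}}, τ* ≥ s, ρ^{Root} > T−s}]`,
where on `{X_{σ_s} = Y_{τ*_{s−1}}, τ* ≥ s}` one automatically has `ρ^{Root} > T − s`
(i.e. `(u, X_u) ∈ D` for all `u ≤ T − s`). -/
theorem one_step_identities
    (P : Measure Ω) [IsProbabilityMeasure P] (ξ η : ℕ → Ω → ℤ)
    (h : IndepSSRWIncrements P ξ η)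
    (D : Set (ℕ × ℤ)) (hD : IsRootCont D)
    (lam : Measure ℤ) [IsProbabilityMeasure lam] (hlam : FiniteFirstMoment lam)
    (T : ℕ) (y : ℤ)
    (hUI : UniformIntegrable
      (fun (t : ℕ) (p : ℤ × Ω) => ((walk ξ p.1 (hitBy D (walk ξ p.1) t p.2) p.2 : ℤ) : ℝ))
      1 (lam.prod P))
    (s : ℕ) (hs0 : 0 < s) (hsT : s < T) :
    (∫ p : ℤ × Ω,
        ((|walk ξ p.1
            (hitBy D (walk ξ p.1) (T - min (revHitBy D (walk η y) T p.2) s) p.2) p.2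
          - walk η y (min (revHitBy D (walk η y) T p.2) s) p.2| : ℤ) : ℝ) ∂(lam.prod P)
      = ∫ p : ℤ × Ω,
        (((|walk ξ p.1
            (hitBy D (walk ξ p.1) (T - min (revHitBy D (walk η y) T p.2) s) p.2) p.2
          - walk η y (min (revHitBy D (walk η y) T p.2) (s - 1)) p.2| : ℤ) : ℝ)
        + (if walk ξ p.1
              (hitBy D (walk ξ p.1) (T - min (revHitBy D (walk η y) T p.2) s) p.2) p.2
              = walk η y (min (revHitBy D (walk η y) T p.2) (s - 1)) p.2
            ∧ s ≤ revHitBy D (walk η y) T p.2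
          then (1 : ℝ) else 0)) ∂(lam.prod P)) ∧
    (∫ p : ℤ × Ω,
        ((|walk ξ p.1
            (hitBy D (walk ξ p.1) (T - min (revHitBy D (walk η y) T p.2) (s - 1)) p.2) p.2
          - walk η y (min (revHitBy D (walk η y) T p.2) (s - 1)) p.2| : ℤ) : ℝ) ∂(lam.prod P)
      = ∫ p : ℤ × Ω,
        (((|walk ξ p.1
            (hitBy D (walk ξ p.1) (T - min (revHitBy D (walk η y) T p.2) s) p.2) p.2
          - walk η y (min (revHitBy D (walk η y) T p.2) (s - 1)) p.2| : ℤ) : ℝ)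
        + (if walk ξ p.1
              (hitBy D (walk ξ p.1) (T - min (revHitBy D (walk η y) T p.2) s) p.2) p.2
              = walk η y (min (revHitBy D (walk η y) T p.2) (s - 1)) p.2
            ∧ s ≤ revHitBy D (walk η y) T p.2
            ∧ (∀ u, u ≤ T - s → (u, walk ξ p.1 u p.2) ∈ D)
          then (1 : ℝ) else 0)) ∂(lam.prod P)) ∧
    (∀ p : ℤ × Ω,
      walk ξ p.1 (hitBy D (walk ξ p.1) (T - min (revHitBy D (walk η y) T p.2) s) p.2) p.2
          = walk η y (min (revHitBy D (walk η y) T p.2) (s - 1)) p.2 →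
      s ≤ revHitBy D (walk η y) T p.2 →
      ∀ u, u ≤ T - s → (u, walk ξ p.1 u p.2) ∈ D) := by
  obtain ⟨hξm, hηm, hξf, hηf, hind⟩ := id h
  have hIL1 : Integrable
      (fun p : ℤ × Ω => fL1 D T y s p.1 (fun i => ξ i p.2) (fun i => η i p.2)) (lam.prod P) :=
    big_integrable (C := |(y : ℝ)| + 2 * (T : ℝ) + 1) P lam hlam hξm hηm hξf hηf
      (fun x a a' b b' ha hb => fL1_congr hs0 hsT ha hb)
      (fun x a b ha hb => le_trans (fL1_bound hs0 hsT ha hb) (le_of_eq (by ring)))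
  have hIR1 : Integrable
      (fun p : ℤ × Ω => fR1 D T y s p.1 (fun i => ξ i p.2) (fun i => η i p.2)) (lam.prod P) :=
    big_integrable (C := |(y : ℝ)| + 2 * (T : ℝ) + 1) P lam hlam hξm hηm hξf hηf
      (fun x a a' b b' ha hb => fR1_congr hs0 hsT ha hb)
      (fun x a b ha hb => le_trans (fR1_bound hs0 hsT ha hb) (le_of_eq (by ring)))
  have hIL2 : Integrable
      (fun p : ℤ × Ω => fL2 D T y s p.1 (fun i => ξ i p.2) (fun i => η i p.2)) (lam.prod P) :=
    big_integrable (C := |(y : ℝ)| + 2 * (T : ℝ) + 1) P lam hlam hξm hηm hξf hηf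
      (fun x a a' b b' ha hb => fL2_congr hs0 hsT ha hb)
      (fun x a b ha hb => le_trans (fL2_bound hs0 hsT ha hb) (le_of_eq (by ring)))
  have hIR2 : Integrable
      (fun p : ℤ × Ω => fR2 D T y s p.1 (fun i => ξ i p.2) (fun i => η i p.2)) (lam.prod P) :=
    big_integrable (C := |(y : ℝ)| + 2 * (T : ℝ) + 1) P lam hlam hξm hηm hξf hηf
      (fun x a a' b b' ha hb => fR2_congr hs0 hsT ha hb)
      (fun x a b ha hb => le_trans (fR2_bound hs0 hsT ha hb) (le_of_eq (by ring)))
  have h1 : ∫ p, fL1 D T y s p.1 (fun i => ξ i p.2) (fun i => η i p.2) ∂(lam.prod P)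
      = ∫ p, fR1 D T y s p.1 (fun i => ξ i p.2) (fun i => η i p.2) ∂(lam.prod P) := by
    rw [MeasureTheory.integral_prod _ hIL1, MeasureTheory.integral_prod _ hIR1]
    exact integral_congr_ae (Filter.Eventually.of_forall fun x =>
      inner1 P ξ η h D hD T s hs0 hsT y x)
  have h2 : ∫ p, fL2 D T y s p.1 (fun i => ξ i p.2) (fun i => η i p.2) ∂(lam.prod P)
      = ∫ p, fR2 D T y s p.1 (fun i => ξ i p.2) (fun i => η i p.2) ∂(lam.prod P) := by
    rw [MeasureTheory.integral_prod _ hIL2, MeasureTheory.integral_prod _ hIR2]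
    exact integral_congr_ae (Filter.Eventually.of_forall fun x =>
      inner2 P ξ η h D hD T s hs0 hsT y x)
  refine ⟨h1, h2, ?_⟩
  intro p hEq hτ
  exact key3 hD hs0 hsT hEq hτ

end SwitchingIdentities
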